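/- Under the setting of the previous statement, if the sampling probabilities satisfy $\pi_i \ge \beta \frac{\|A_{(:,i)}\|_2 \|B_{(i,:)}\|_2}{\sum_{j=1}^n \|A_{(:,j)}\|_2 \|B_{(j,:)}\|_2}$ for some $\beta \in (0,1]$ (and the denominator is positive), then $\mathbf{E}[\|AB - M\|_F^2] \le \frac{1}{\beta \tau}\|A\|_F^2 \|B\|_F^2$. -/

import Mathlib

open Finset

open Complex

set_option maxHeartbeats 1000000

lemma prod_expect {n τ : ℕ} (π : Fin n → ℝ) (hsum : ∑ i, π i = 1)
    (f : Fin n → ℂ) (hf : ∑ i, (π i : ℂ) * f i = 0) (t s : Fin τ) :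
    ∑ ω : Fin τ → Fin n, (∏ u, (π (ω u) : ℂ)) * (f (ω t) * (starRingEnd ℂ) (f (ω s)))
      = if t = s then ∑ i, (π i : ℂ) * (f i * (starRingEnd ℂ) (f i)) else 0 := by
  have hrw : ∀ ω : Fin τ → Fin n,
      (∏ u, (π (ω u) : ℂ)) * (f (ω t) * (starRingEnd ℂ) (f (ω s)))
        = ∏ u, ((π (ω u) : ℂ) * (if t = u then f (ω u) else 1)
            * (if s = u then (starRingEnd ℂ) (f (ω u)) else 1)) := by
    intro ω
    rw [Finset.prod_mul_distrib, Finset.prod_mul_distrib, Finset.prod_ite_eq,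
      Finset.prod_ite_eq]
    simp [mul_assoc]
  simp only [hrw]
  rw [← Fintype.prod_sum
    (fun (u : Fin τ) (i : Fin n) => (π i : ℂ) * (if t = u then f i else 1)
      * (if s = u then (starRingEnd ℂ) (f i) else 1))]
  have hπc : ∑ i, (π i : ℂ) = 1 := by exact_mod_cast congrArg (Complex.ofReal) hsum
  by_cases hts : t = s
  · subst hts
    have h1 : ∀ u : Fin τ, (∑ i, (π i : ℂ) * (if t = u then f i else 1)
        * (if t = u then (starRingEnd ℂ) (f i) else 1))
        = if t = u then ∑ i, (π i : ℂ) * (f i * (starRingEnd ℂ) (f i)) else 1 := by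
      intro u
      by_cases h : t = u
      · simp [h, mul_assoc]
      · simp [h, hπc]
    simp only [h1, Finset.prod_ite_eq, Finset.mem_univ, if_true]
  · rw [if_neg hts]
    apply Finset.prod_eq_zero (Finset.mem_univ t)
    have hst : ¬ (s = t) := fun h => hts h.symm
    simp [hst, hf]

lemma expect_normSq {n τ : ℕ} (π : Fin n → ℝ) (hsum : ∑ i, π i = 1)
    (f : Fin n → ℂ) (hf : ∑ i, (π i : ℂ) * f i = 0) :
    ∑ ω : Fin τ → Fin n, (∏ u, π (ω u)) * Complex.normSq (∑ t, f (ω t))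
      = τ * ∑ i, π i * Complex.normSq (f i) := by
  have h : ∑ ω : Fin τ → Fin n, (∏ u, (π (ω u) : ℂ)) *
      ((∑ t, f (ω t)) * (starRingEnd ℂ) (∑ s, f (ω s)))
      = (τ : ℂ) * ∑ i, (π i : ℂ) * (f i * (starRingEnd ℂ) (f i)) := by
    have expand : ∀ ω : Fin τ → Fin n,
        (∏ u, (π (ω u) : ℂ)) * ((∑ t, f (ω t)) * (starRingEnd ℂ) (∑ s, f (ω s)))
          = ∑ t, ∑ s, (∏ u, (π (ω u) : ℂ)) * (f (ω t) * (starRingEnd ℂ) (f (ω s))) := by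
      intro ω
      rw [map_sum, Finset.sum_mul_sum]
      rw [Finset.mul_sum]
      refine Finset.sum_congr rfl fun t _ => ?_
      rw [Finset.mul_sum]
    simp only [expand]
    rw [Finset.sum_comm]
    have : ∀ t : Fin τ, ∑ ω : Fin τ → Fin n, ∑ s, (∏ u, (π (ω u) : ℂ)) *
        (f (ω t) * (starRingEnd ℂ) (f (ω s)))
        = ∑ i, (π i : ℂ) * (f i * (starRingEnd ℂ) (f i)) := by
      intro t
      rw [Finset.sum_comm]
      simp only [prod_expect π hsum f hf t]
      simp
    simp only [this, Finset.sum_const, Finset.card_univ, Fintype.card_fin, nsmul_eq_mul]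
  have h2 : ∑ ω : Fin τ → Fin n, (∏ u, (π (ω u) : ℂ)) *
      ((∑ t, f (ω t)) * (starRingEnd ℂ) (∑ s, f (ω s)))
      = ((∑ ω : Fin τ → Fin n, (∏ u, π (ω u)) * Complex.normSq (∑ t, f (ω t)) : ℝ) : ℂ) := by
    push_cast
    refine Finset.sum_congr rfl fun ω _ => ?_
    rw [Complex.mul_conj]
  have h3 : ((∑ ω : Fin τ → Fin n, (∏ u, π (ω u)) * Complex.normSq (∑ t, f (ω t)) : ℝ) : ℂ)
      = ((↑(τ * ∑ i, π i * Complex.normSq (f i)) : ℝ) : ℂ) := by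
    rw [← h2, h]
    push_cast
    refine congrArg _ (Finset.sum_congr rfl fun i _ => ?_)
    rw [Complex.mul_conj]
  exact_mod_cast h3

lemma variance_le {n : ℕ} (π : Fin n → ℝ) (hsum : ∑ i, π i = 1) (Y : Fin n → ℂ)
    (D : ℂ) (hD : ∑ i, (π i : ℂ) * Y i = D) :
    ∑ i, π i * Complex.normSq (D - Y i) ≤ ∑ i, π i * Complex.normSq (Y i) := by
  have h1 : ∑ i, (π i : ℂ) * (D * (starRingEnd ℂ) (Y i)) = D * (starRingEnd ℂ) D := by
    rw [← hD, map_sum, Finset.mul_sum]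
    refine Finset.sum_congr rfl fun i _ => ?_
    rw [map_mul, Complex.conj_ofReal]
    ring
  have h1' : ∑ i, π i * (D * (starRingEnd ℂ) (Y i)).re = Complex.normSq D := by
    have := congrArg Complex.re h1
    rw [Complex.re_sum] at this
    simp only [Complex.mul_conj, Complex.ofReal_re] at this ⊢
    rw [← this]
    refine Finset.sum_congr rfl fun i _ => ?_
    rw [Complex.re_ofReal_mul]
  have key : ∑ i, π i * Complex.normSq (D - Y i)
      = ∑ i, π i * Complex.normSq (Y i) - Complex.normSq D := by
    have e : ∀ i ∈ Finset.univ (α := Fin n), π i * Complex.normSq (D - Y i)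
        = π i * Complex.normSq D + π i * Complex.normSq (Y i)
          - 2 * (π i * (D * (starRingEnd ℂ) (Y i)).re) := by
      intro i _
      rw [Complex.normSq_sub]
      ring
    rw [Finset.sum_congr rfl e, Finset.sum_sub_distrib, Finset.sum_add_distrib,
      ← Finset.sum_mul, hsum, ← Finset.mul_sum, h1']
    ring
  rw [key]
  have := Complex.normSq_nonneg D
  linarith

/-- Matrix version of Lemma 4.1: if the sampling probabilities satisfy
`π i ≥ β ‖A_{(:,i)}‖‖B_{(i,:)}‖ / ∑_j ‖A_{(:,j)}‖‖B_{(j,:)}‖` for some `β ∈ (0,1]`,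
then `E[‖A*B - M‖_F²] ≤ ‖A‖_F² ‖B‖_F² / (β τ)`. -/
theorem randomized_matmul_error_beta (m n p τ : ℕ) (hτ : 0 < τ)
    (A : Matrix (Fin m) (Fin n) ℂ) (B : Matrix (Fin n) (Fin p) ℂ)
    (π : Fin n → ℝ) (hπ : ∀ i, 0 < π i) (hsum : ∑ i, π i = 1)
    (β : ℝ) (hβ0 : 0 < β) (hβ1 : β ≤ 1)
    (hden : 0 < ∑ j, Real.sqrt (∑ k, ‖A k j‖ ^ 2) * Real.sqrt (∑ q, ‖B j q‖ ^ 2))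
    (hπlb : ∀ i, π i ≥ β * (Real.sqrt (∑ k, ‖A k i‖ ^ 2) * Real.sqrt (∑ q, ‖B i q‖ ^ 2)) /
      ∑ j, Real.sqrt (∑ k, ‖A k j‖ ^ 2) * Real.sqrt (∑ q, ‖B j q‖ ^ 2)) :
    let w : (Fin τ → Fin n) → ℝ := fun ω => ∏ t, π (ω t)
    let M : (Fin τ → Fin n) → Matrix (Fin m) (Fin p) ℂ := fun ω =>
      (τ : ℝ)⁻¹ • ∑ t, (π (ω t))⁻¹ • Matrix.of (fun i j => A i (ω t) * B (ω t) j)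
    (∑ ω, w ω * ∑ i, ∑ j, ‖(A * B - M ω) i j‖ ^ 2) ≤
      (β * τ)⁻¹ * ((∑ i, ∑ k, ‖A k i‖ ^ 2) * (∑ i, ∑ j, ‖B i j‖ ^ 2)) := by
  intro w M
  have hτR : (0:ℝ) < (τ : ℝ) := by exact_mod_cast hτ
  have hτC : (τ : ℂ) ≠ 0 := by exact_mod_cast hτR.ne'
  have hπne : ∀ k, (π k : ℂ) ≠ 0 := fun k => by exact_mod_cast (hπ k).ne'
  set a : Fin n → ℝ := fun i => Real.sqrt (∑ k, ‖A k i‖ ^ 2) with ha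
  set b : Fin n → ℝ := fun i => Real.sqrt (∑ q, ‖B i q‖ ^ 2) with hb
  set S : ℝ := ∑ j, a j * b j with hS
  -- the centered variable per entry
  set g : Fin m → Fin p → Fin n → ℂ :=
    fun i j k => (A * B) i j - (π k : ℂ)⁻¹ * (A i k * B k j) with hg
  -- Step B: centered
  have hcent : ∀ i j, ∑ k, (π k : ℂ) * ((π k : ℂ)⁻¹ * (A i k * B k j)) = (A * B) i j := by
    intro i j
    rw [Matrix.mul_apply]
    refine Finset.sum_congr rfl fun k _ => ?_
    rw [← mul_assoc, mul_inv_cancel₀ (hπne k), one_mul]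
  have hcent0 : ∀ i j, ∑ k, (π k : ℂ) * g i j k = 0 := by
    intro i j
    simp only [hg, mul_sub, Finset.sum_sub_distrib]
    rw [hcent, ← Finset.sum_mul]
    have : ∑ k, (π k : ℂ) = 1 := by exact_mod_cast congrArg Complex.ofReal hsum
    rw [this, one_mul, sub_self]
  -- Step A: entry formula
  have hentry : ∀ (ω : Fin τ → Fin n) i j,
      ‖(A * B - M ω) i j‖ ^ 2 = ((τ:ℝ)⁻¹) ^ 2 * Complex.normSq (∑ t, g i j (ω t)) := by
    intro ω i j
    have e1 : (A * B - M ω) i j = ((τ:ℝ)⁻¹ : ℂ) * ∑ t, g i j (ω t) := by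
      simp only [M, Matrix.sub_apply, Matrix.smul_apply, Matrix.sum_apply, Matrix.of_apply,
        real_smul, Complex.ofReal_inv]
      simp only [hg]
      rw [Finset.sum_sub_distrib, Finset.sum_const, Finset.card_univ, Fintype.card_fin,
        nsmul_eq_mul]
      field_simp
      simp only [Complex.ofReal_natCast]
      field_simp
    rw [e1, norm_mul, mul_pow]
    congr 1
    · rw [norm_inv]
      norm_num [Complex.norm_real, Real.norm_eq_abs, abs_of_pos hτR]
    · rw [Complex.sq_norm]
  have hA : ∀ k, ∑ i, Complex.normSq (A i k) = a k ^ 2 := by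
    intro k
    rw [ha, Real.sq_sqrt (by positivity)]
    refine Finset.sum_congr rfl fun i _ => ?_
    rw [Complex.normSq_eq_norm_sq]
  have hB : ∀ k, ∑ j, Complex.normSq (B k j) = b k ^ 2 := by
    intro k
    rw [hb, Real.sq_sqrt (by positivity)]
    refine Finset.sum_congr rfl fun j _ => ?_
    rw [Complex.normSq_eq_norm_sq]
  have hEentry : ∀ i j,
      ∑ ω : Fin τ → Fin n, w ω * ‖(A * B - M ω) i j‖ ^ 2
        ≤ (τ:ℝ)⁻¹ * ∑ k, (π k)⁻¹ * (Complex.normSq (A i k) * Complex.normSq (B k j)) := by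
    intro i j
    calc ∑ ω : Fin τ → Fin n, w ω * ‖(A * B - M ω) i j‖ ^ 2
        = ((τ:ℝ)⁻¹) ^ 2 * ∑ ω : Fin τ → Fin n,
            (∏ u, π (ω u)) * Complex.normSq (∑ t, g i j (ω t)) := by
          rw [Finset.mul_sum]
          refine Finset.sum_congr rfl fun ω _ => ?_
          rw [hentry ω i j]
          simp only [w]
          ring
      _ = ((τ:ℝ)⁻¹) ^ 2 * ((τ:ℝ) * ∑ k, π k * Complex.normSq (g i j k)) := by
          rw [expect_normSq π hsum _ (hcent0 i j)]
      _ = (τ:ℝ)⁻¹ * ∑ k, π k * Complex.normSq (g i j k) := by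
          field_simp
      _ ≤ (τ:ℝ)⁻¹ * ∑ k, π k * Complex.normSq ((π k : ℂ)⁻¹ * (A i k * B k j)) := by
          refine mul_le_mul_of_nonneg_left ?_ (by positivity)
          exact variance_le π hsum _ _ (hcent i j)
      _ = (τ:ℝ)⁻¹ * ∑ k, (π k)⁻¹ * (Complex.normSq (A i k) * Complex.normSq (B k j)) := by
          congr 1
          refine Finset.sum_congr rfl fun k _ => ?_
          rw [Complex.normSq_mul, Complex.normSq_inv, Complex.normSq_mul,
            Complex.normSq_ofReal]
          field_simp [(hπ k).ne']
  have swap : (∑ ω, w ω * ∑ i, ∑ j, ‖(A * B - M ω) i j‖ ^ 2)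
      = ∑ i, ∑ j, ∑ ω : Fin τ → Fin n, w ω * ‖(A * B - M ω) i j‖ ^ 2 := by
    simp_rw [Finset.mul_sum]
    rw [Finset.sum_comm]
    exact Finset.sum_congr rfl fun i _ => Finset.sum_comm
  have hmid : ∑ i, ∑ j, ((τ:ℝ)⁻¹ * ∑ k, (π k)⁻¹ *
        (Complex.normSq (A i k) * Complex.normSq (B k j)))
      = (τ:ℝ)⁻¹ * ∑ k, (π k)⁻¹ * (a k ^ 2 * b k ^ 2) := by
    have e1 : ∀ k, (π k)⁻¹ * (a k ^ 2 * b k ^ 2)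
        = ∑ i, ∑ j, (π k)⁻¹ * (Complex.normSq (A i k) * Complex.normSq (B k j)) := by
      intro k
      rw [← hA k, ← hB k, Finset.sum_mul_sum]
      simp_rw [Finset.mul_sum]
    simp_rw [e1, Finset.mul_sum]
    calc ∑ i, ∑ j, ∑ k, (τ:ℝ)⁻¹ * ((π k)⁻¹ *
          (Complex.normSq (A i k) * Complex.normSq (B k j)))
        = ∑ i, ∑ k, ∑ j, (τ:ℝ)⁻¹ * ((π k)⁻¹ *
          (Complex.normSq (A i k) * Complex.normSq (B k j))) :=
          Finset.sum_congr rfl fun i _ => Finset.sum_comm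
      _ = ∑ k, ∑ i, ∑ j, (τ:ℝ)⁻¹ * ((π k)⁻¹ *
          (Complex.normSq (A i k) * Complex.normSq (B k j))) := Finset.sum_comm
  have hk : ∀ k, (π k)⁻¹ * (a k ^ 2 * b k ^ 2) ≤ (S / β) * (a k * b k) := by
    intro k
    by_cases hab : a k * b k = 0
    · have h0 : a k ^ 2 * b k ^ 2 = (a k * b k) ^ 2 := by ring
      rw [h0, hab]
      simp
    · have hab0 : 0 ≤ a k * b k := mul_nonneg (Real.sqrt_nonneg _) (Real.sqrt_nonneg _)
      have habpos : 0 < a k * b k := lt_of_le_of_ne hab0 (Ne.symm hab)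
      have hc : 0 < β * (a k * b k) / S := div_pos (mul_pos hβ0 habpos) hden
      have h1 : π k ≥ β * (a k * b k) / S := hπlb k
      have h2 : (π k)⁻¹ ≤ (β * (a k * b k) / S)⁻¹ := inv_anti₀ hc h1
      have h3 : (β * (a k * b k) / S)⁻¹ = S / (β * (a k * b k)) := by rw [inv_div]
      rw [h3] at h2
      calc (π k)⁻¹ * (a k ^ 2 * b k ^ 2)
          ≤ S / (β * (a k * b k)) * (a k ^ 2 * b k ^ 2) :=
            mul_le_mul_of_nonneg_right h2 (by positivity)
        _ = (S / β) * (a k * b k) := by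
            field_simp
  have hCS : S ^ 2 ≤ (∑ i, a i ^ 2) * (∑ i, b i ^ 2) := by
    rw [hS]
    exact Finset.sum_mul_sq_le_sq_mul_sq Finset.univ a b
  have hRA : ∑ i, ∑ k, ‖A k i‖ ^ 2 = ∑ i, a i ^ 2 := by
    refine Finset.sum_congr rfl fun i _ => ?_
    rw [ha, Real.sq_sqrt (by positivity)]
  have hRB : ∑ i, ∑ j, ‖B i j‖ ^ 2 = ∑ i, b i ^ 2 := by
    refine Finset.sum_congr rfl fun i _ => ?_
    rw [hb, Real.sq_sqrt (by positivity)]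
  calc (∑ ω, w ω * ∑ i, ∑ j, ‖(A * B - M ω) i j‖ ^ 2)
      = ∑ i, ∑ j, ∑ ω : Fin τ → Fin n, w ω * ‖(A * B - M ω) i j‖ ^ 2 := swap
    _ ≤ ∑ i, ∑ j, ((τ:ℝ)⁻¹ * ∑ k, (π k)⁻¹ *
          (Complex.normSq (A i k) * Complex.normSq (B k j))) :=
        Finset.sum_le_sum fun i _ => Finset.sum_le_sum fun j _ => hEentry i j
    _ = (τ:ℝ)⁻¹ * ∑ k, (π k)⁻¹ * (a k ^ 2 * b k ^ 2) := hmid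
    _ ≤ (τ:ℝ)⁻¹ * ∑ k, (S / β) * (a k * b k) := by
        refine mul_le_mul_of_nonneg_left (Finset.sum_le_sum fun k _ => hk k) (by positivity)
    _ = (β * τ)⁻¹ * S ^ 2 := by
        rw [← Finset.mul_sum, ← hS]
        field_simp
    _ ≤ (β * τ)⁻¹ * ((∑ i, ∑ k, ‖A k i‖ ^ 2) * (∑ i, ∑ j, ‖B i j‖ ^ 2)) := by
        rw [hRA, hRB]
        exact mul_le_mul_of_nonneg_left hCS (by positivity)
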